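/- arXiv:2209.07037 — 5 statements merged into one kernel-verified Lean document; each statement's English description precedes it below -/
import Mathlib

section
/- Let h, v1, v2, g, ξ, A_g be real numbers with h ≠ 0, and let J be the x-direction flux Jacobian of the shallow water–Exner system with Grass closure model (m = 3). Then the characteristic polynomial of J factors as det(λI − J) = (λ − v1) · (λ³ − 2 v1 λ² + (v1² − g h − g ξ A_g (3 v1² + v2²)) λ + g ξ A_g v1 (3 v1² + v2²)). -/
open Polynomial

set_option maxHeartbeats 1000000 in
/-- The characteristic polynomial of the x-direction flux Jacobian of the
shallow water–Exner system with Grass closure model (m = 3) factors as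
`(λ − v1) · (λ³ − 2 v1 λ² + (v1² − g h − g ξ A_g (3 v1² + v2²)) λ
  + g ξ A_g v1 (3 v1² + v2²))`. -/
theorem swe_exner_charpoly_factorization
    (h v1 v2 g ξ Ag : ℝ) (hh : h ≠ 0)
    (J : Matrix (Fin 4) (Fin 4) ℝ)
    (hJ : J = !![0, 1, 0, 0;
                 g * h - v1 ^ 2, 2 * v1, 0, g * h;
                 -(v1 * v2), v2, v1, 0;
                 -(3 * ξ * Ag * v1 * (v1 ^ 2 + v2 ^ 2)) / h,
                   ξ * Ag * (3 * v1 ^ 2 + v2 ^ 2) / h,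
                   2 * ξ * Ag * v1 * v2 / h, 0]) :
    J.charpoly =
      (X - C v1) *
        (X ^ 3 - C (2 * v1) * X ^ 2
          + C (v1 ^ 2 - g * h - g * ξ * Ag * (3 * v1 ^ 2 + v2 ^ 2)) * X
          + C (g * ξ * Ag * v1 * (3 * v1 ^ 2 + v2 ^ 2))) := by
  subst hJ
  have hC : (C h : ℝ[X]) * C h⁻¹ = 1 := by
    rw [← C_mul, mul_inv_cancel₀ hh, C_1]
  rw [Matrix.charpoly]
  simp only [Matrix.det_succ_row_zero, Fin.sum_univ_succ, Matrix.charmatrix_apply,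
    Matrix.diagonal_apply, Matrix.submatrix_apply, Fin.succ_zero_eq_one, Fin.succ_one_eq_two,
    Matrix.cons_val', Matrix.cons_val_zero, Matrix.cons_val_one, Matrix.head_cons,
    Matrix.empty_val', Matrix.cons_val_fin_one, Matrix.head_fin_const, Fin.isValue,
    Matrix.of_apply, Finset.univ_unique, Finset.sum_singleton, Matrix.det_unique,
    Fin.default_eq_zero, Fin.succAbove, Fin.castSucc, Fin.castAdd, Fin.castLE, Fin.lt_def,
    map_sub, map_add, map_mul, map_neg, map_zero, map_one, map_ofNat, div_eq_mul_inv, map_pow,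
    map_inv₀]
  norm_num [Fin.ext_iff, Matrix.cons_val_one, Matrix.head_cons, Matrix.vecHead, Matrix.vecTail,
    Function.comp]
  simp only [show (C 2 : ℝ[X]) = 2 from map_ofNat C _, show (C 3 : ℝ[X]) = 3 from map_ofNat C _,
    map_mul, Matrix.cons_val, map_zero, map_neg, map_add, map_sub, map_pow]
  linear_combination (C g * C ξ * C Ag * (6*C v1^3*X + 2*C v1*C v2^2*X - 3*C v1^2*X^2
    - C v2^2*X^2 - C v1^2*C v2^2 - 3*C v1^4) : ℝ[X]) * hC
end

section
/- Let h, v1, v2, g, ξ, A_g be real numbers with h ≠ 0, and let J be the x-direction flux Jacobian of the shallow water–Exner system with Grass closure model (m = 3). Then v1 is an eigenvalue of J, i.e., v1 is a root of the characteristic polynomial of J. -/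
open Polynomial

/-- `v1` is an eigenvalue of the x-direction flux Jacobian of the shallow
water–Exner system with Grass closure model (m = 3), i.e., a root of its
characteristic polynomial. -/
theorem swe_exner_v1_eigenvalue
    (h v1 v2 g ξ Ag : ℝ) (hh : h ≠ 0)
    (J : Matrix (Fin 4) (Fin 4) ℝ)
    (hJ : J = !![0, 1, 0, 0;
                 g * h - v1 ^ 2, 2 * v1, 0, g * h;
                 -(v1 * v2), v2, v1, 0;
                 -(3 * ξ * Ag * v1 * (v1 ^ 2 + v2 ^ 2)) / h,
                   ξ * Ag * (3 * v1 ^ 2 + v2 ^ 2) / h,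
                   2 * ξ * Ag * v1 * v2 / h, 0]) :
    J.charpoly.IsRoot v1 := by
  have this1 : J.charpoly.eval v1 = ((Matrix.charmatrix J).map (eval v1)).det := by
    rw [Matrix.charpoly, ← Polynomial.coe_evalRingHom, RingHom.map_det]
    rfl
  have key : (Matrix.charmatrix J).map (eval v1) =
      !![v1, -1, 0, 0;
         -(g * h - v1 ^ 2), v1 - 2 * v1, 0, -(g * h);
         v1 * v2, -v2, 0, 0;
         (3 * ξ * Ag * v1 * (v1 ^ 2 + v2 ^ 2)) / h,
           -(ξ * Ag * (3 * v1 ^ 2 + v2 ^ 2) / h),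
           -(2 * ξ * Ag * v1 * v2 / h), v1] := by
    subst hJ
    ext i j
    fin_cases i <;> fin_cases j <;>
      simp [Matrix.charmatrix_apply, Matrix.one_apply, Matrix.vecHead, Matrix.vecTail] <;> ring
  rw [Polynomial.IsRoot, this1, key]
  simp [Matrix.det_succ_row_zero, Fin.sum_univ_succ, Fin.succAbove]
  ring
end

section
/- Let h, v1, v2, g, ξ, A_g be real numbers with h ≠ 0, and let J be the x-direction flux Jacobian of the shallow water–Exner system with Grass closure model (m = 3). A real number λ is an eigenvalue of J if and only if λ = v1 or λ³ − 2 v1 λ² + (v1² − g h − g ξ A_g (3 v1² + v2²)) λ + g ξ A_g v1 (3 v1² + v2²) = 0. -/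
open Polynomial

/-- A real number `lam` is an eigenvalue of the x-direction flux Jacobian of
the shallow water–Exner system with Grass closure model (m = 3) if and only if
`lam = v1` or `lam` is a root of the associated cubic. -/
theorem swe_exner_eigenvalue_iff
    (h v1 v2 g ξ Ag : ℝ) (hh : h ≠ 0)
    (J : Matrix (Fin 4) (Fin 4) ℝ)
    (hJ : J = !![0, 1, 0, 0;
                 g * h - v1 ^ 2, 2 * v1, 0, g * h;
                 -(v1 * v2), v2, v1, 0;
                 -(3 * ξ * Ag * v1 * (v1 ^ 2 + v2 ^ 2)) / h,
                   ξ * Ag * (3 * v1 ^ 2 + v2 ^ 2) / h,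
                   2 * ξ * Ag * v1 * v2 / h, 0])
    (lam : ℝ) :
    Module.End.HasEigenvalue (Matrix.toLin' J) lam ↔
      lam = v1 ∨
        lam ^ 3 - 2 * v1 * lam ^ 2
          + (v1 ^ 2 - g * h - g * ξ * Ag * (3 * v1 ^ 2 + v2 ^ 2)) * lam
          + g * ξ * Ag * v1 * (3 * v1 ^ 2 + v2 ^ 2) = 0 := by
  have key : Module.End.HasEigenvalue (Matrix.toLin' J) lam ↔ (J - lam • 1).det = 0 := by
    rw [← Matrix.exists_mulVec_eq_zero_iff]
    constructor
    · intro hE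
      obtain ⟨v, hv, hv0⟩ := hE.exists_hasEigenvector
      rw [Module.End.mem_eigenspace_iff, Matrix.toLin'_apply] at hv
      exact ⟨v, hv0, by
        rw [Matrix.sub_mulVec, Matrix.smul_mulVec, Matrix.one_mulVec, hv]; simp⟩
    · rintro ⟨v, hv0, hv⟩
      apply Module.End.hasEigenvalue_of_hasEigenvector (x := v)
      constructor
      · rw [Module.End.mem_eigenspace_iff]
        rw [Matrix.toLin'_apply]
        have := hv
        rw [Matrix.sub_mulVec, Matrix.smul_mulVec, Matrix.one_mulVec, sub_eq_zero] at this
        simpa using this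
      · exact hv0
  rw [key, hJ]
  rw [show (lam • (1 : Matrix (Fin 4) (Fin 4) ℝ)) = !![lam,0,0,0;0,lam,0,0;0,0,lam,0;0,0,0,lam] by
    ext i j; fin_cases i <;> fin_cases j <;> simp [Matrix.one_apply, Matrix.vecHead, Matrix.vecTail]]
  rw [show (!![0, 1, 0, 0;
                 g * h - v1 ^ 2, 2 * v1, 0, g * h;
                 -(v1 * v2), v2, v1, 0;
                 -(3 * ξ * Ag * v1 * (v1 ^ 2 + v2 ^ 2)) / h,
                   ξ * Ag * (3 * v1 ^ 2 + v2 ^ 2) / h,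
                   2 * ξ * Ag * v1 * v2 / h, 0] - !![lam,0,0,0;0,lam,0,0;0,0,lam,0;0,0,0,lam]) = !![0-lam, 1, 0, 0;
                 g * h - v1 ^ 2, 2 * v1 - lam, 0, g * h;
                 -(v1 * v2), v2, v1 - lam, 0;
                 -(3 * ξ * Ag * v1 * (v1 ^ 2 + v2 ^ 2)) / h,
                   ξ * Ag * (3 * v1 ^ 2 + v2 ^ 2) / h,
                   2 * ξ * Ag * v1 * v2 / h, 0 - lam] by
    ext i j; fin_cases i <;> fin_cases j <;> simp [Matrix.vecHead, Matrix.vecTail]]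
  rw [Matrix.det_succ_row_zero]
  simp only [Fin.sum_univ_succ, Fin.sum_univ_zero, Matrix.det_fin_three, Matrix.submatrix_apply,
    Fin.succAbove, Matrix.cons_val', Matrix.cons_val_zero, Matrix.cons_val_one, Matrix.head_cons,
    Matrix.empty_val', Matrix.cons_val_fin_one, Matrix.head_fin_const, Fin.val_zero, Fin.val_succ,
    Matrix.cons_val_succ, Fin.castSucc, Fin.castAdd, Fin.castLE, Fin.lt_def, Matrix.vecHead,
    Matrix.vecTail]
  norm_num
  simp only [Matrix.cons_val_two, Matrix.vecHead, Matrix.vecTail, Matrix.cons_val_zero, Matrix.cons_val_one, Matrix.cons_val_succ, Function.comp_apply, Fin.succ_zero_eq_one, Fin.succ_one_eq_two]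
  norm_num
  constructor
  · intro hd
    by_cases hlv : lam = v1
    · exact Or.inl hlv
    · right
      have hfac : (v1 - lam) * ((lam ^ 3 - 2 * v1 * lam ^ 2
          + (v1 ^ 2 - g * h - g * ξ * Ag * (3 * v1 ^ 2 + v2 ^ 2)) * lam
          + g * ξ * Ag * v1 * (3 * v1 ^ 2 + v2 ^ 2)) / (-1)) = 0 := by
        rw [← hd]; field_simp; ring
      rcases mul_eq_zero.mp hfac with h1 | h1
      · exact absurd (by linarith [sub_eq_zero.mp h1]) hlv
      · field_simp at h1; linarith [h1]
  · intro hc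
    rcases hc with h1 | h1
    · subst h1; field_simp; ring
    · field_simp
      linear_combination (lam - v1) * h1
end

section
/- Let h, v1, v2, g, ξ, A_g be real numbers with h ≠ 0, and let J_y be the y-direction flux Jacobian of the shallow water–Exner system with Grass closure model (m = 3). Then the characteristic polynomial of J_y factors as det(λI − J_y) = (λ − v2) · (λ³ − 2 v2 λ² + (v2² − g h − g ξ A_g (v1² + 3 v2²)) λ + g ξ A_g v2 (v1² + 3 v2²)). -/
open Polynomial

set_option maxHeartbeats 1600000

lemma my_det_fin_four {R : Type*} [CommRing R] (A : Matrix (Fin 4) (Fin 4) R) :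
    A.det =
      A 0 0*A 1 1*A 2 2*A 3 3 - A 0 0*A 1 1*A 2 3*A 3 2 - A 0 0*A 1 2*A 2 1*A 3 3 + A 0 0*A 1 2*A 2 3*A 3 1 + A 0 0*A 1 3*A 2 1*A 3 2 - A 0 0*A 1 3*A 2 2*A 3 1 - A 0 1*A 1 0*A 2 2*A 3 3 + A 0 1*A 1 0*A 2 3*A 3 2 + A 0 1*A 1 2*A 2 0*A 3 3 - A 0 1*A 1 2*A 2 3*A 3 0 - A 0 1*A 1 3*A 2 0*A 3 2 + A 0 1*A 1 3*A 2 2*A 3 0 + A 0 2*A 1 0*A 2 1*A 3 3 - A 0 2*A 1 0*A 2 3*A 3 1 - A 0 2*A 1 1*A 2 0*A 3 3 + A 0 2*A 1 1*A 2 3*A 3 0 + A 0 2*A 1 3*A 2 0*A 3 1 - A 0 2*A 1 3*A 2 1*A 3 0 - A 0 3*A 1 0*A 2 1*A 3 2 + A 0 3*A 1 0*A 2 2*A 3 1 + A 0 3*A 1 1*A 2 0*A 3 2 - A 0 3*A 1 1*A 2 2*A 3 0 - A 0 3*A 1 2*A 2 0*A 3 1 + A 0 3*A 1 2*A 2 1*A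 3 0 := by
  rw [Matrix.det_succ_row_zero]
  simp [Fin.sum_univ_succ, Matrix.det_fin_three, Matrix.submatrix_apply, Fin.succAbove]
  ring

/-- The characteristic polynomial of the y-direction flux Jacobian of the
shallow water–Exner system with Grass closure model (m = 3) factors as
`(λ − v2) · (λ³ − 2 v2 λ² + (v2² − g h − g ξ A_g (v1² + 3 v2²)) λ
  + g ξ A_g v2 (v1² + 3 v2²))`. -/
theorem swe_exner_charpoly_factorization_y
    (h v1 v2 g ξ Ag : ℝ) (hh : h ≠ 0)
    (Jy : Matrix (Fin 4) (Fin 4) ℝ)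
    (hJy : Jy = !![0, 0, 1, 0;
                   -(v1 * v2), v2, v1, 0;
                   g * h - v2 ^ 2, 0, 2 * v2, g * h;
                   -(3 * ξ * Ag * v2 * (v1 ^ 2 + v2 ^ 2)) / h,
                     2 * ξ * Ag * v1 * v2 / h,
                     ξ * Ag * (v1 ^ 2 + 3 * v2 ^ 2) / h, 0]) :
    Jy.charpoly =
      (X - C v2) *
        (X ^ 3 - C (2 * v2) * X ^ 2
          + C (v2 ^ 2 - g * h - g * ξ * Ag * (v1 ^ 2 + 3 * v2 ^ 2)) * X
          + C (g * ξ * Ag * v2 * (v1 ^ 2 + 3 * v2 ^ 2))) := by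
  subst hJy
  apply Polynomial.funext
  intro x
  rw [Matrix.charpoly, my_det_fin_four]
  simp [Matrix.charmatrix_apply, Matrix.one_apply]
  field_simp
  ring
end

section
/- Let g > 0, h > 0, σ ∈ (0,1), ξ = 1/(1 − σ), A_g ∈ [0,1], and v1, v2 ∈ ℝ, and let J be the x-direction flux Jacobian of the shallow water–Exner system with Grass closure model (m = 3). Then all eigenvalues of J are real; equivalently, the characteristic polynomial of J splits into linear factors over ℝ, so the system is hyperbolic. -/
open Polynomial Filter

/-- A monic real cubic that is positive at `x1` and negative at some `x2 > x1`
has three (distinct) real roots, hence splits over `ℝ`. -/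
lemma cubic_splits_of_signs (p : ℝ[X]) (hm : p.Monic) (hd : p.natDegree = 3)
    (x1 x2 : ℝ) (hx : x1 < x2) (h1 : 0 < p.eval x1) (h2 : p.eval x2 < 0) :
    Splits p := by
  have hp0 : p ≠ 0 := hm.ne_zero
  have hdeg : 0 < p.degree := by
    rw [← Polynomial.natDegree_pos_iff_degree_pos, hd]; norm_num
  -- a point to the right where p is positive
  have ht : Tendsto (fun x => p.eval x) atTop atTop :=
    p.tendsto_atTop_of_leadingCoeff_nonneg hdeg (by simp [hm.leadingCoeff])
  obtain ⟨x3, hx3p, hx3⟩ :=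
    ((ht.eventually (eventually_gt_atTop 0)).and (eventually_gt_atTop x2)).exists
  -- a point to the left where p is negative
  set q : ℝ[X] := p.comp (-X) with hq
  have hqdeg : q.natDegree = 3 := by
    rw [hq, natDegree_comp, hd]; simp
  have hqd : 0 < q.degree := by
    rw [← Polynomial.natDegree_pos_iff_degree_pos, hqdeg]; norm_num
  have hqlc : q.leadingCoeff ≤ 0 := by
    rw [hq, leadingCoeff_comp (by simp)]
    simp [hm.leadingCoeff, hd]
    norm_num
  have hb : Tendsto (fun x => q.eval x) atTop atBot :=
    q.tendsto_atBot_of_leadingCoeff_nonpos hqd hqlc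
  obtain ⟨y, hyneg, hy⟩ :=
    ((hb.eventually (eventually_lt_atBot 0)).and (eventually_gt_atTop (-x1))).exists
  have hx0eval : p.eval (-y) < 0 := by
    have : q.eval y = p.eval (-y) := by simp [hq, eval_comp]
    linarith [this ▸ hyneg]
  have hx0 : -y < x1 := by linarith
  -- IVT thrice
  have hc : ∀ a b : ℝ, ContinuousOn (fun x => p.eval x) (Set.Icc a b) :=
    fun a b => (p.continuous_aeval).continuousOn
  obtain ⟨r1, hr1mem, hr1⟩ := intermediate_value_Ioo (le_of_lt hx0) (hc (-y) x1)
    (Set.mem_Ioo.mpr ⟨hx0eval, h1⟩)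
  obtain ⟨r2, hr2mem, hr2⟩ := intermediate_value_Ioo' (le_of_lt hx) (hc x1 x2)
    (Set.mem_Ioo.mpr ⟨h2, h1⟩)
  obtain ⟨r3, hr3mem, hr3⟩ := intermediate_value_Ioo (le_of_lt hx3) (hc x2 x3)
    (Set.mem_Ioo.mpr ⟨h2, hx3p⟩)
  have o1 : r1 < r2 := lt_trans hr1mem.2 hr2mem.1
  have o2 : r2 < r3 := lt_trans hr2mem.2 hr3mem.1
  -- count roots
  have hmem : ∀ r : ℝ, p.eval r = 0 → r ∈ p.roots.toFinset := by
    intro r hr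
    rw [Multiset.mem_toFinset, mem_roots hp0]
    exact hr
  have hsub : ({r1, r2, r3} : Finset ℝ) ⊆ p.roots.toFinset := by
    intro x hx
    simp only [Finset.mem_insert, Finset.mem_singleton] at hx
    rcases hx with rfl | rfl | rfl
    · exact hmem _ hr1
    · exact hmem _ hr2
    · exact hmem _ hr3
  have hcard3 : ({r1, r2, r3} : Finset ℝ).card = 3 :=
    Finset.card_eq_three.mpr ⟨r1, r2, r3, ne_of_lt o1, ne_of_lt (lt_trans o1 o2), ne_of_lt o2, rfl⟩
  have h3le : 3 ≤ Multiset.card p.roots := by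
    calc 3 = ({r1, r2, r3} : Finset ℝ).card := hcard3.symm
    _ ≤ p.roots.toFinset.card := Finset.card_le_card hsub
    _ ≤ Multiset.card p.roots := Multiset.toFinset_card_le _
  have hle3 : Multiset.card p.roots ≤ 3 := hd ▸ p.card_roots'
  refine (Polynomial.splits_iff_card_roots).mpr ?_
  omega

/-- The sediment cubic `X³ - 2uX² + (u² - a - K)X + uK` with `a > 0`, `K ≥ 0`
splits over `ℝ`. -/
lemma exner_cubic_splits (u a K : ℝ) (ha : 0 < a) (hK : 0 ≤ K) :
    Splits
      (X ^ 3 - C (2 * u) * X ^ 2 + C (u ^ 2 - a - K) * X + C (u * K)) := by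
  set p : ℝ[X] := X ^ 3 - C (2 * u) * X ^ 2 + C (u ^ 2 - a - K) * X + C (u * K) with hp
  have hev : ∀ t : ℝ, p.eval t = t ^ 3 - 2 * u * t ^ 2 + (u ^ 2 - a - K) * t + u * K := by
    intro t; simp [hp]
  have hm : p.Monic := by rw [hp]; monicity!
  have hd : p.natDegree = 3 := by rw [hp]; compute_degree!
  rcases eq_or_lt_of_le hK with hK0 | hKpos
  · -- K = 0 : explicit roots 0, u ± √a
    have hs : Real.sqrt a ^ 2 = a := Real.sq_sqrt ha.le
    have : p = (X - C 0) * ((X - C (u + Real.sqrt a)) * (X - C (u - Real.sqrt a))) := by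
      apply Polynomial.funext
      intro t
      simp only [hev, eval_mul, eval_sub, eval_X, eval_C]
      linear_combination t * hs + (t - u) * hK0
    rw [this]
    exact Splits.mul (Splits.X_sub_C _) (Splits.mul (Splits.X_sub_C _) (Splits.X_sub_C _))
  · rcases lt_trichotomy u 0 with hu | hu | hu
    · -- u < 0 : p(u) > 0 > p(0)
      refine cubic_splits_of_signs p hm hd u 0 hu ?_ ?_
      · rw [hev]; nlinarith
      · rw [hev]; nlinarith
    · -- u = 0 : explicit roots 0, ±√(a+K)
      subst hu
      have hak : (0:ℝ) < a + K := by linarith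
      have hs : Real.sqrt (a + K) ^ 2 = a + K := Real.sq_sqrt hak.le
      have : p = (X - C 0) * ((X - C (Real.sqrt (a + K))) * (X - C (-Real.sqrt (a + K)))) := by
        apply Polynomial.funext
        intro t
        simp only [hev, eval_mul, eval_sub, eval_X, eval_C]
        linear_combination t * hs
      rw [this]
      exact Splits.mul (Splits.X_sub_C _) (Splits.mul (Splits.X_sub_C _) (Splits.X_sub_C _))
    · -- u > 0 : p(0) > 0 > p(u)
      refine cubic_splits_of_signs p hm hd 0 u hu ?_ ?_
      · rw [hev]; nlinarith
      · rw [hev]; nlinarith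

/-- Hyperbolicity: under the physical assumptions `g > 0`, `h > 0`,
`σ ∈ (0,1)`, `ξ = 1/(1 − σ)`, `A_g ∈ [0,1]`, the characteristic polynomial of
the x-direction flux Jacobian of the shallow water–Exner system with Grass
closure model (m = 3) splits into linear factors over ℝ, i.e., all its
eigenvalues are real. -/
theorem swe_exner_hyperbolic
    (g h σ ξ Ag v1 v2 : ℝ)
    (hg : 0 < g) (hh : 0 < h) (hσ : σ ∈ Set.Ioo (0 : ℝ) 1)
    (hξ : ξ = 1 / (1 - σ)) (hAg : Ag ∈ Set.Icc (0 : ℝ) 1)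
    (J : Matrix (Fin 4) (Fin 4) ℝ)
    (hJ : J = !![0, 1, 0, 0;
                 g * h - v1 ^ 2, 2 * v1, 0, g * h;
                 -(v1 * v2), v2, v1, 0;
                 -(3 * ξ * Ag * v1 * (v1 ^ 2 + v2 ^ 2)) / h,
                   ξ * Ag * (3 * v1 ^ 2 + v2 ^ 2) / h,
                   2 * ξ * Ag * v1 * v2 / h, 0]) :
    Polynomial.Splits (J.charpoly.map (RingHom.id ℝ)) := by
  set c : ℝ := ξ * Ag / h with hc
  -- the characteristic polynomial factors as (X - v1) * cubic
  have key : J.charpoly = (X - C v1) *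
      (X ^ 3 - C (2 * v1) * X ^ 2
        + C (v1 ^ 2 - (g * h) - (g * h * c * (3 * v1 ^ 2 + v2 ^ 2))) * X
        + C (v1 * (g * h * c * (3 * v1 ^ 2 + v2 ^ 2)))) := by
    have hJ' : J = !![0, 1, 0, 0;
                   g * h - v1 ^ 2, 2 * v1, 0, g * h;
                   -(v1 * v2), v2, v1, 0;
                   c * (-(3 * v1 * (v1 ^ 2 + v2 ^ 2))), c * (3 * v1 ^ 2 + v2 ^ 2),
                     c * (2 * v1 * v2), 0] := by
      rw [hJ]
      ext i j
      fin_cases i <;> fin_cases j <;> simp [hc] <;> ring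
    have hcm : J.charmatrix =
        !![X, -1, 0, 0;
           -C (g * h - v1 ^ 2), X - C (2 * v1), 0, -C (g * h);
           C (v1 * v2), -C v2, X - C v1, 0;
           -C (c * (-(3 * v1 * (v1 ^ 2 + v2 ^ 2)))), -C (c * (3 * v1 ^ 2 + v2 ^ 2)),
             -C (c * (2 * v1 * v2)), X] := by
      ext i j
      rw [hJ']
      fin_cases i <;> fin_cases j <;>
        simp [Matrix.charmatrix_apply_eq, Matrix.charmatrix_apply_ne,
          Matrix.vecHead, Matrix.vecTail]
    rw [Matrix.charpoly, hcm]
    simp [Matrix.det_succ_row_zero, Fin.sum_univ_succ, Fin.succAbove]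
    simp only [map_mul, map_add, map_sub, map_neg, map_ofNat, map_one, map_pow,
      C_mul, C_add, C_sub, C_neg]
    ring
  -- positivity facts
  have hξpos : 0 < ξ := by
    rw [hξ]
    have : (0:ℝ) < 1 - σ := by linarith [hσ.2]
    positivity
  have hcnn : 0 ≤ c := by
    rw [hc]
    have := hAg.1
    positivity
  have hKnn : 0 ≤ g * h * c * (3 * v1 ^ 2 + v2 ^ 2) := by positivity
  have hgh : 0 < g * h := by positivity
  rw [Polynomial.map_id, key]
  exact Splits.mul (Splits.X_sub_C _)
    (exner_cubic_splits v1 (g * h) (g * h * c * (3 * v1 ^ 2 + v2 ^ 2)) hgh hKnn)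
end
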